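/- Let V be a complex Hilbert space and (φ_n)_{n ∈ ℕ} a sequence in V with ‖φ_n‖ = 1 for all n. Suppose there is a constant C > 0 such that |⟨φ_n, φ_m⟩| ≤ C / (√(1 + n²) · (m − n)) for all integers 0 ≤ n < m. Then there exists a constant C̃ > 0, depending only on C, such that for every square-summable sequence a = (a_n)_{n ∈ ℕ} of complex numbers the series Σ_{n=0}^∞ a_n φ_n converges in V and ‖Σ_{n=0}^∞ a_n φ_n‖² ≤ (1 + C̃) Σ_{n=0}^∞ |a_n|². -/

import Mathlib

open Complex Filter

section AuxAlmostOrth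
open Finset

noncomputable def qq (x : ℝ) : ℝ := Real.sqrt (Real.sqrt x)

lemma qq_nonneg (x : ℝ) : 0 ≤ qq x := Real.sqrt_nonneg _

lemma qq_pow (x : ℝ) (hx : 0 ≤ x) : (qq x) ^ 4 = x := by
  have h1 : (qq x) ^ 2 = Real.sqrt x := Real.sq_sqrt (Real.sqrt_nonneg x)
  have : ((qq x) ^ 2) ^ 2 = x := by rw [h1]; exact Real.sq_sqrt hx
  nlinarith [this]

lemma qq_mono {x y : ℝ} (h : x ≤ y) : qq x ≤ qq y :=
  Real.sqrt_le_sqrt (Real.sqrt_le_sqrt h)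

lemma qq_one : qq 1 = 1 := by simp [qq]

lemma qq_zero : qq 0 = 0 := by simp [qq]

lemma one_le_qq {x : ℝ} (h : 1 ≤ x) : 1 ≤ qq x := by
  simpa [qq_one] using qq_mono h

lemma qq_pos {x : ℝ} (h : 0 < x) : 0 < qq x :=
  Real.sqrt_pos.2 (Real.sqrt_pos.2 h)

lemma sqrt_le_self' {x : ℝ} (h : 1 ≤ x) : Real.sqrt x ≤ x := by
  have := Real.sqrt_le_sqrt (show x ≤ x^2 by nlinarith)
  rwa [Real.sqrt_sq (by linarith)] at this

lemma qq_le_self {x : ℝ} (h : 1 ≤ x) : qq x ≤ x := by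
  have h1 : Real.sqrt x ≤ x := sqrt_le_self' h
  have h2 : qq x ≤ Real.sqrt x := sqrt_le_self' (Real.one_le_sqrt.2 h)
  linarith

lemma qq_mul {x y : ℝ} (hx : 0 ≤ x) : qq (x * y) = qq x * qq y := by
  unfold qq
  rw [Real.sqrt_mul hx, Real.sqrt_mul (Real.sqrt_nonneg x)]

lemma qq_cube_le {x : ℝ} (h : 1 ≤ x) : (qq x) ^ 3 ≤ x := by
  have h1 : 1 ≤ qq x := one_le_qq h
  calc (qq x)^3 = (qq x)^3 * 1 := by ring
  _ ≤ (qq x)^3 * qq x := by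
      apply mul_le_mul_of_nonneg_left h1 (by positivity)
  _ = (qq x)^4 := by ring
  _ = x := qq_pow x (by linarith)

lemma key_ineq {x y : ℝ} (hy : 0 ≤ y) (hxy : y ≤ x) (h1 : x ^ 4 - y ^ 4 = 1) :
    1 ≤ 4 * x ^ 3 * (x - y) := by
  have hx : 0 ≤ x := le_trans hy hxy
  have hident : (x - y) * (x^3 + x^2*y + x*y^2 + y^3) = x^4 - y^4 := by ring
  have hcomp : x^3 + x^2*y + x*y^2 + y^3 ≤ 4 * x^3 := by nlinarith [mul_nonneg hx hy, mul_nonneg (mul_nonneg hx hx) hy, mul_nonneg (mul_nonneg hy hy) (sub_nonneg.2 hxy), mul_nonneg hy (mul_nonneg hy hy)]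
  nlinarith [mul_le_mul_of_nonneg_left hcomp (sub_nonneg.2 hxy)]

-- telescoping building block: 1/(qq (j+1))^3 ≤ 4 (qq (j+1) - qq j)
lemma qq_diff (j : ℕ) : 1 / (qq ((j:ℝ)+1)) ^ 3 ≤ 4 * (qq ((j:ℝ)+1) - qq (j:ℝ)) := by
  set x := qq ((j:ℝ)+1) with hx
  set y := qq (j:ℝ) with hy
  have hx4 : x ^ 4 = (j:ℝ)+1 := qq_pow _ (by positivity)
  have hy4 : y ^ 4 = (j:ℝ) := qq_pow _ (by positivity)
  have hx1 : 1 ≤ x := one_le_qq (by push_cast; linarith [Nat.cast_nonneg (α := ℝ) j])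
  have hy0 : 0 ≤ y := qq_nonneg _
  have hxy : y ≤ x := qq_mono (by linarith)
  have key : 1 ≤ 4 * x^3 * (x - y) := key_ineq hy0 hxy (by rw [hx4, hy4]; ring)
  have hx3 : (0:ℝ) < x^3 := by positivity
  rw [div_le_iff₀ hx3]
  nlinarith [key]

-- sum bound A: ∑_{j<N} 1/(qq (j+1))^3 ≤ 4 qq N
lemma sumA (N : ℕ) : ∑ j ∈ range N, 1 / (qq ((j:ℝ)+1)) ^ 3 ≤ 4 * qq (N:ℝ) := by
  calc ∑ j ∈ range N, 1 / (qq ((j:ℝ)+1)) ^ 3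
      ≤ ∑ j ∈ range N, (4 * qq (((j+1:ℕ)):ℝ) - 4 * qq ((j:ℕ):ℝ)) := by
        apply Finset.sum_le_sum
        intro j _
        have := qq_diff j
        push_cast
        linarith
    _ = 4 * qq ((N:ℕ):ℝ) - 4 * qq ((0:ℕ):ℝ) := Finset.sum_range_sub (fun j => 4 * qq (j:ℝ)) N
    _ ≤ 4 * qq (N:ℝ) := by norm_num [qq_zero]

-- telescoping building block B
lemma qq_diffB (j : ℕ) (hj : 1 ≤ j) :
    1 / (((j:ℝ)+1) * qq ((j:ℝ)+1)) ≤ 4 * (1 / qq (j:ℝ) - 1 / qq ((j:ℝ)+1)) := by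
  set x := qq ((j:ℝ)+1) with hx
  set y := qq (j:ℝ) with hy
  have hx4 : x ^ 4 = (j:ℝ)+1 := qq_pow _ (by positivity)
  have hy4 : y ^ 4 = (j:ℝ) := qq_pow _ (by positivity)
  have hy1 : 1 ≤ y := one_le_qq (by exact_mod_cast hj)
  have hxy : y ≤ x := qq_mono (by linarith)
  have hx1 : 1 ≤ x := le_trans hy1 hxy
  have key : 1 ≤ 4 * x^3 * (x - y) := key_ineq (by linarith) hxy (by rw [hx4, hy4]; ring)
  have hxpos : (0:ℝ) < x := by linarith
  have hypos : (0:ℝ) < y := by linarith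
  have h2 : 4 * (1/y - 1/x) = 4 * (x - y) / (x * y) := by
    rw [div_sub_div _ _ (ne_of_gt hypos) (ne_of_gt hxpos)]
    rw [mul_comm y x, mul_div_assoc']
    ring_nf
  rw [h2, div_le_div_iff₀ (by positivity) (by positivity)]
  have hxx : x * y ≤ x^2 := by nlinarith
  have hk2 : x^2 ≤ 4 * (x-y) * x^5 := by nlinarith [mul_le_mul_of_nonneg_right key (sq_nonneg x)]
  have hj1 : ((j:ℝ)+1) * x = x^5 := by rw [← hx4]; ring
  calc (1:ℝ) * (x*y) = x * y := by ring
    _ ≤ 4*(x-y) * x^5 := le_trans hxx hk2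
    _ = 4*(x-y) * (((j:ℝ)+1) * x) := by rw [hj1]

-- sum bound B: ∑_{j<N} 1/((j+1) qq(j+1)) ≤ 5
lemma sumB (N : ℕ) : ∑ j ∈ range N, 1 / (((j:ℝ)+1) * qq ((j:ℝ)+1)) ≤ 5 := by
  cases N with
  | zero => norm_num
  | succ M =>
    rw [Finset.sum_range_succ' (fun j => 1 / (((j:ℝ)+1) * qq ((j:ℝ)+1))) M]
    have hf0 : 1 / (((((0:ℕ)):ℝ)+1) * qq ((((0:ℕ)):ℝ)+1)) = 1 := by norm_num [qq_one]
    have htel : ∑ i ∈ range M, ((fun i => 4 / qq (((i+1:ℕ)):ℝ)) i - (fun i => 4 / qq (((i+1:ℕ)):ℝ)) (i+1))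
        = 4 / qq (((0+1:ℕ)):ℝ) - 4 / qq (((M+1:ℕ)):ℝ) :=
      Finset.sum_range_sub' (fun i => 4 / qq (((i+1:ℕ)):ℝ)) M
    have htail : ∑ i ∈ range M, 1 / (((((i+1:ℕ):ℝ))+1) * qq (((((i+1:ℕ):ℝ))+1))) ≤ 4 := by
      have hstep : ∑ i ∈ range M, 1 / (((((i+1:ℕ):ℝ))+1) * qq (((((i+1:ℕ):ℝ))+1)))
          ≤ ∑ i ∈ range M, ((fun i => 4 / qq (((i+1:ℕ)):ℝ)) i - (fun i => 4 / qq (((i+1:ℕ)):ℝ)) (i+1)) := by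
        apply Finset.sum_le_sum
        intro i _
        have h1 := qq_diffB (i+1) (by omega)
        have heq : (4:ℝ) / qq (((i:ℝ)+1)) - 4 / qq (((i:ℝ)+1)+1)
            = 4 * (1 / qq (((i:ℝ)+1)) - 1 / qq (((i:ℝ)+1)+1)) := by ring
        simp only []
        push_cast
        rw [heq]
        push_cast at h1
        exact h1
      rw [htel] at hstep
      have hpos : (0:ℝ) ≤ 4 / qq (((M+1:ℕ)):ℝ) := div_nonneg (by norm_num) (qq_nonneg _)
      have h1 : 4 / qq (((0+1:ℕ)):ℝ) = 4 := by norm_num [qq_one]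
      linarith
    calc (∑ i ∈ range M, 1 / (((((i+1:ℕ)):ℝ)+1) * qq (((((i+1:ℕ)):ℝ)+1)))) + 1 / (((((0:ℕ)):ℝ)+1) * qq (((((0:ℕ)):ℝ)+1)))
        ≤ 4 + 1 := by rw [hf0]; linarith [htail]
      _ = 5 := by norm_num

noncomputable def ww (n : ℕ) : ℝ := Real.sqrt (1 + (n:ℝ)^2)

lemma one_le_ww (n : ℕ) : 1 ≤ ww n := by
  have h := Real.sqrt_le_sqrt (show (1:ℝ) ≤ 1 + (n:ℝ)^2 by nlinarith [sq_nonneg ((n:ℝ))])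
  rwa [Real.sqrt_one] at h

lemma ww_pos (n : ℕ) : 0 < ww n := lt_of_lt_of_le one_pos (one_le_ww n)

lemma le_ww (n : ℕ) : (n:ℝ) ≤ ww n := by
  have h := Real.sqrt_le_sqrt (show ((n:ℝ))^2 ≤ 1 + (n:ℝ)^2 by linarith)
  rwa [Real.sqrt_sq (by positivity)] at h

lemma sqrt_four : Real.sqrt 4 = 2 := by
  rw [show (4:ℝ) = 2^2 by norm_num, Real.sqrt_sq (by norm_num)]

lemma np1_le_two_ww (n : ℕ) : (n:ℝ) + 1 ≤ 2 * ww n := by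
  have h := Real.sqrt_le_sqrt (show ((n:ℝ)+1)^2 ≤ 4 * (1 + (n:ℝ)^2) by nlinarith [sq_nonneg ((n:ℝ)-1)])
  rwa [Real.sqrt_sq (by positivity), Real.sqrt_mul (by norm_num : (0:ℝ) ≤ 4), sqrt_four] at h

lemma ww_le (m : ℕ) : ww m ≤ (m:ℝ) + 1 := by
  have h := Real.sqrt_le_sqrt (show 1 + (m:ℝ)^2 ≤ ((m:ℝ)+1)^2 by nlinarith [Nat.cast_nonneg (α := ℝ) m])
  rwa [Real.sqrt_sq (by positivity)] at h

lemma rowBound (C : ℝ) (hC : 0 < C) (K : ℕ → ℕ → ℝ) (hK0 : ∀ n m, 0 ≤ K n m)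
    (hK : ∀ n m, n < m → K n m ≤ C / (ww n * (((m - n : ℕ)):ℝ)))
    (n : ℕ) (s' : Finset ℕ) (hs' : ∀ m ∈ s', n < m) :
    ∑ m ∈ s', K n m * (qq (ww n) / qq (ww m)) ≤ 5 * C := by
  set f : ℕ → ℝ := fun k => C / ((k:ℝ) * qq (k:ℝ)) with hf
  have hfnn : ∀ k, 0 ≤ f k := by
    intro k
    apply div_nonneg hC.le
    exact mul_nonneg (Nat.cast_nonneg k) (qq_nonneg _)
  -- termwise bound
  have hterm : ∀ m ∈ s', K n m * (qq (ww n) / qq (ww m)) ≤ f (m - n) := by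
    intro m hm
    have hnm := hs' m hm
    set k := m - n with hkdef
    have hk1 : 1 ≤ k := by omega
    have hkR : (1:ℝ) ≤ (k:ℝ) := by exact_mod_cast hk1
    have hkpos : (0:ℝ) < (k:ℝ) := by linarith
    have h1 : K n m ≤ C / (ww n * (k:ℝ)) := hK n m hnm
    have hrat : (0:ℝ) ≤ qq (ww n) / qq (ww m) :=
      div_nonneg (qq_nonneg _) (qq_nonneg _)
    have step1 : K n m * (qq (ww n) / qq (ww m)) ≤ (C / (ww n * (k:ℝ))) * (qq (ww n) / qq (ww m)) :=
      mul_le_mul_of_nonneg_right h1 hrat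
    have step2 : (C / (ww n * (k:ℝ))) * (qq (ww n) / qq (ww m)) ≤ f k := by
      rw [div_mul_div_comm, hf]
      simp only []
      rw [div_le_div_iff₀ (mul_pos (mul_pos (ww_pos n) hkpos) (qq_pos (ww_pos m))) (mul_pos hkpos (qq_pos hkpos))]
      -- C * qq (ww n) * ((k:ℝ) * qq (k:ℝ)) ≤ C * (ww n * (k:ℝ) * qq (ww m))
      have ha : qq (ww n) ≤ ww n := qq_le_self (one_le_ww n)
      have hb : qq ((k:ℝ)) ≤ qq (ww m) := by
        apply qq_mono
        calc (k:ℝ) ≤ (m:ℝ) := by exact_mod_cast Nat.sub_le m n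
        _ ≤ ww m := le_ww m
      have hmain : qq (ww n) * qq ((k:ℝ)) ≤ ww n * qq (ww m) :=
        mul_le_mul ha hb (qq_nonneg _) (ww_pos n).le
      nlinarith [mul_le_mul_of_nonneg_left hmain (mul_nonneg hC.le hkpos.le)]
    linarith
  calc ∑ m ∈ s', K n m * (qq (ww n) / qq (ww m)) ≤ ∑ m ∈ s', f (m - n) :=
        Finset.sum_le_sum hterm
    _ = ∑ k ∈ s'.image (· - n), f k := by
        rw [Finset.sum_image]
        intro x hx y hy hxy
        have hx' := hs' x hx
        have hy' := hs' y hy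
        have hxy' : x - n = y - n := hxy
        omega
    _ ≤ ∑ k ∈ Finset.Icc 1 (s'.sup id), f k := by
        apply Finset.sum_le_sum_of_subset_of_nonneg
        · intro k hk
          simp only [Finset.mem_image] at hk
          obtain ⟨m, hm, rfl⟩ := hk
          have := hs' m hm
          have hle : m ≤ s'.sup id := Finset.le_sup (f := id) hm
          simp only [Finset.mem_Icc]
          omega
        · intro k _ _; exact hfnn k
    _ ≤ 5 * C := by
        rw [← Finset.Ico_add_one_right_eq_Icc, Finset.sum_Ico_eq_sum_range]
        have : ∀ i, f (1 + i) = C * (1 / (((i:ℝ)+1) * qq ((i:ℝ)+1))) := by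
          intro i
          rw [hf]
          push_cast
          rw [mul_one_div, add_comm (1:ℝ) (i:ℝ)]
        rw [Finset.sum_congr rfl (fun i _ => this i), ← Finset.mul_sum]
        calc C * ∑ i ∈ range (s'.sup id + 1 - 1), 1 / (((i:ℝ)+1) * qq ((i:ℝ)+1))
            ≤ C * 5 := mul_le_mul_of_nonneg_left (sumB _) hC.le
          _ = 5 * C := by ring

lemma qq_three_le_two : qq 3 ≤ 2 := by
  have h16 : qq 16 = 2 := by
    unfold qq
    rw [show (16:ℝ) = 4^2 by norm_num, Real.sqrt_sq (by norm_num), sqrt_four]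
  calc qq 3 ≤ qq 16 := qq_mono (by norm_num)
  _ = 2 := h16

lemma qq_two_cube_le : (qq 2)^3 ≤ 2 := by
  have h4 : (qq 2)^4 = 2 := qq_pow 2 (by norm_num)
  have h1 : 1 ≤ qq 2 := one_le_qq (by norm_num)
  nlinarith

-- main pointwise bound for column sums
lemma col_term (C : ℝ) (hC : 0 < C) (K : ℕ → ℕ → ℝ) (hK0 : ∀ n m, 0 ≤ K n m)
    (hK : ∀ n m, n < m → K n m ≤ C / (ww n * (((m - n : ℕ)):ℝ)))
    (m n : ℕ) (hnm : n < m) :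
    K n m * (qq (ww m) / qq (ww n)) ≤
      4*C / ((m:ℝ) * (qq (((m - n : ℕ)):ℝ))^3) + 8*C / ((qq (((n+1:ℕ)):ℝ))^3 * (qq ((m:ℕ):ℝ))^3) := by
  set k := m - n with hkdef
  have hk1 : 1 ≤ k := by omega
  have hkR : (1:ℝ) ≤ (k:ℝ) := by exact_mod_cast hk1
  have hkpos : (0:ℝ) < (k:ℝ) := by linarith
  have hqk : (0:ℝ) < qq (k:ℝ) := qq_pos hkpos
  have hqk4 : (qq ((k:ℝ)))^4 = (k:ℝ) := qq_pow _ hkpos.le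
  -- step (a): K n m * (qq wwm / qq wwn) ≤ 2C/(ww n * (qq k)^3)
  have hwm : qq (ww m) ≤ 2 * qq (ww n) * qq ((k:ℝ)) := by
    have h1 : ww m ≤ ww n * ((k:ℝ) * 3) := by
      have h2 : ww m ≤ (m:ℝ) + 1 := ww_le m
      have h3 : (m:ℝ) = (n:ℝ) + (k:ℝ) := by
        rw [hkdef]
        have : n + (m - n) = m := by omega
        push_cast [Nat.cast_sub hnm.le]
        ring
      have h4 : (n:ℝ) ≤ ww n := le_ww n
      have h5 : 1 ≤ ww n := one_le_ww n
      nlinarith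
    calc qq (ww m) ≤ qq (ww n * ((k:ℝ) * 3)) := qq_mono h1
      _ = qq (ww n) * (qq ((k:ℝ)) * qq 3) := by
          rw [qq_mul (ww_pos n).le, qq_mul hkpos.le]
      _ ≤ 2 * qq (ww n) * qq ((k:ℝ)) := by
          have h6 : 0 ≤ qq (ww n) := qq_nonneg _
          have h7 : 0 ≤ qq ((k:ℝ)) := qq_nonneg _
          have h8 := mul_le_mul_of_nonneg_left qq_three_le_two (mul_nonneg h6 h7)
          nlinarith [h8]
  have ha : K n m * (qq (ww m) / qq (ww n)) ≤ 2*C / (ww n * (qq ((k:ℝ)))^3) := by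
    have h1 : K n m ≤ C / (ww n * (k:ℝ)) := hK n m hnm
    have step1 : K n m * (qq (ww m) / qq (ww n)) ≤ (C / (ww n * (k:ℝ))) * (qq (ww m) / qq (ww n)) :=
      mul_le_mul_of_nonneg_right h1 (div_nonneg (qq_nonneg _) (qq_nonneg _))
    have step2 : (C / (ww n * (k:ℝ))) * (qq (ww m) / qq (ww n)) ≤ 2*C / (ww n * (qq ((k:ℝ)))^3) := by
      rw [div_mul_div_comm]
      rw [div_le_div_iff₀ (mul_pos (mul_pos (ww_pos n) hkpos) (qq_pos (ww_pos n)))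
        (mul_pos (ww_pos n) (by positivity))]
      -- C * qq (ww m) * (ww n * (qq k)^3) ≤ 2C * (ww n * k * qq (ww n))
      have hqq : C * qq (ww m) ≤ C * (2 * qq (ww n) * qq ((k:ℝ))) :=
        mul_le_mul_of_nonneg_left hwm hC.le
      have hrw : (k:ℝ) = (qq ((k:ℝ)))^4 := hqk4.symm
      have h6 : 0 ≤ qq (ww n) := qq_nonneg _
      have h8 : 0 < ww n := ww_pos n
      have h9 : 2*C*(ww n * (qq ((k:ℝ)))^4 * qq (ww n)) = 2*C*(ww n * (k:ℝ) * qq (ww n)) := by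
        rw [hqk4]
      nlinarith [mul_le_mul_of_nonneg_right hqq (mul_nonneg h8.le (pow_nonneg hqk.le 3)), h9]
    linarith
  -- step (b): case split
  have hsplit : 2*C / (ww n * (qq ((k:ℝ)))^3) ≤
      4*C / ((m:ℝ) * (qq ((k:ℝ)))^3) + 8*C / ((qq (((n+1:ℕ)):ℝ))^3 * (qq ((m:ℕ):ℝ))^3) := by
    have hterm2 : (0:ℝ) ≤ 8*C / ((qq (((n+1:ℕ)):ℝ))^3 * (qq ((m:ℕ):ℝ))^3) := by
      apply div_nonneg (by linarith)
      exact mul_nonneg (pow_nonneg (qq_nonneg _) 3) (pow_nonneg (qq_nonneg _) 3)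
    have hterm1 : (0:ℝ) ≤ 4*C / ((m:ℝ) * (qq ((k:ℝ)))^3) := by
      apply div_nonneg (by linarith)
      exact mul_nonneg (by positivity) (pow_nonneg (qq_nonneg _) 3)
    by_cases hcase : m ≤ 2*n
    · -- ww n ≥ n ≥ m/2
      have h1 : (m:ℝ) ≤ 2 * ww n := by
        have := le_ww n
        have : (m:ℝ) ≤ 2*(n:ℝ) := by exact_mod_cast hcase
        nlinarith [le_ww n]
      have h2 : 2*C / (ww n * (qq ((k:ℝ)))^3) ≤ 4*C / ((m:ℝ) * (qq ((k:ℝ)))^3) := by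
        have hmpos : (0:ℝ) < (m:ℝ) := by
          have : 0 < m := by omega
          exact_mod_cast this
        rw [div_le_div_iff₀ (mul_pos (ww_pos n) (by positivity)) (mul_pos hmpos (by positivity))]
        have h9 := mul_le_mul_of_nonneg_left h1
          (mul_nonneg (by linarith : (0:ℝ) ≤ 2*C) (pow_nonneg hqk.le 3))
        nlinarith [h9]
      linarith
    · -- 2n < m, so m ≤ 2k
      push_neg at hcase
      have hm2k : (m:ℝ) ≤ 2*(k:ℝ) := by
        have : m ≤ 2*k := by omega
        exact_mod_cast this
      have hqm3 : (qq ((m:ℕ):ℝ))^3 ≤ 2 * (qq ((k:ℝ)))^3 := by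
        have h1 : qq ((m:ℕ):ℝ) ≤ qq ((k:ℝ)) * qq 2 := by
          calc qq ((m:ℕ):ℝ) ≤ qq ((k:ℝ) * 2) := qq_mono (by linarith)
            _ = qq ((k:ℝ)) * qq 2 := qq_mul hkpos.le
        calc (qq ((m:ℕ):ℝ))^3 ≤ ((qq ((k:ℝ))) * qq 2)^3 :=
              pow_le_pow_left₀ (qq_nonneg _) h1 3
          _ = (qq ((k:ℝ)))^3 * (qq 2)^3 := by ring
          _ ≤ 2 * (qq ((k:ℝ)))^3 := by
              nlinarith [qq_two_cube_le, pow_nonneg (qq_nonneg ((k:ℝ))) 3]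
      have hqn3 : (qq (((n+1:ℕ)):ℝ))^3 ≤ 2 * ww n := by
        calc (qq (((n+1:ℕ)):ℝ))^3 ≤ ((n+1:ℕ):ℝ) := qq_cube_le (by exact_mod_cast Nat.one_le_iff_ne_zero.2 (Nat.succ_ne_zero n))
          _ = (n:ℝ) + 1 := by push_cast; ring
          _ ≤ 2 * ww n := np1_le_two_ww n
      have h2 : 2*C / (ww n * (qq ((k:ℝ)))^3) ≤ 8*C / ((qq (((n+1:ℕ)):ℝ))^3 * (qq ((m:ℕ):ℝ))^3) := by
        have hqn3pos : (0:ℝ) < (qq (((n+1:ℕ)):ℝ))^3 := by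
          apply pow_pos (qq_pos (by positivity))
        have hqm3pos : (0:ℝ) < (qq ((m:ℕ):ℝ))^3 := by
          have : (0:ℝ) < (m:ℝ) := by exact_mod_cast Nat.pos_of_ne_zero (by omega)
          exact pow_pos (qq_pos this) 3
        rw [div_le_div_iff₀ (mul_pos (ww_pos n) (by positivity)) (mul_pos hqn3pos hqm3pos)]
        -- 2C * ((qq(n+1))^3 * (qq m)^3) ≤ 8C * (ww n * (qq k)^3)
        have hprod : (qq (((n+1:ℕ)):ℝ))^3 * (qq ((m:ℕ):ℝ))^3 ≤ (2 * ww n) * (2 * (qq ((k:ℝ)))^3) :=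
          mul_le_mul hqn3 hqm3 (pow_nonneg (qq_nonneg _) 3) (by nlinarith [ww_pos n])
        nlinarith [mul_le_mul_of_nonneg_left hprod (by linarith : (0:ℝ) ≤ 2*C)]
      linarith
  linarith

lemma colBound (C : ℝ) (hC : 0 < C) (K : ℕ → ℕ → ℝ) (hK0 : ∀ n m, 0 ≤ K n m)
    (hK : ∀ n m, n < m → K n m ≤ C / (ww n * (((m - n : ℕ)):ℝ)))
    (m : ℕ) (s' : Finset ℕ) (hs' : ∀ y ∈ s', y < m) :
    ∑ y ∈ s', K y m * (qq (ww m) / qq (ww y)) ≤ 48 * C := by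
  have hnn : ∀ y, 0 ≤ K y m * (qq (ww m) / qq (ww y)) := fun y =>
    mul_nonneg (hK0 y m) (div_nonneg (qq_nonneg _) (qq_nonneg _))
  have hsub : s' ⊆ Finset.range m := fun y hy => Finset.mem_range.2 (hs' y hy)
  have hstep : ∑ y ∈ s', K y m * (qq (ww m) / qq (ww y))
      ≤ ∑ n ∈ Finset.range m, K n m * (qq (ww m) / qq (ww n)) :=
    Finset.sum_le_sum_of_subset_of_nonneg hsub (fun y _ _ => hnn y)
  rcases Nat.eq_zero_or_pos m with hm0 | hmpos
  · subst hm0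
    simp only [Finset.range_zero, Finset.sum_empty] at hstep
    have := Finset.sum_nonneg (fun y (_ : y ∈ s') => hnn y)
    linarith
  have hmR : (1:ℝ) ≤ (m:ℝ) := by exact_mod_cast hmpos
  have hqm1 : 1 ≤ qq ((m:ℕ):ℝ) := one_le_qq hmR
  have hstep2 : ∑ n ∈ Finset.range m, K n m * (qq (ww m) / qq (ww n))
      ≤ ∑ n ∈ Finset.range m, (4*C / ((m:ℝ) * (qq (((m - n : ℕ)):ℝ))^3)
          + 8*C / ((qq (((n+1:ℕ)):ℝ))^3 * (qq ((m:ℕ):ℝ))^3)) := by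
    apply Finset.sum_le_sum
    intro n hn
    exact col_term C hC K hK0 hK m n (Finset.mem_range.1 hn)
  rw [Finset.sum_add_distrib] at hstep2
  -- S1 bound
  have hS1 : ∑ n ∈ Finset.range m, 4*C / ((m:ℝ) * (qq (((m - n : ℕ)):ℝ))^3) ≤ 16 * C := by
    have hrefl : ∑ n ∈ Finset.range m, 4*C / ((m:ℝ) * (qq (((m - n : ℕ)):ℝ))^3)
        = ∑ j ∈ Finset.range m, 4*C / ((m:ℝ) * (qq (((j+1:ℕ)):ℝ))^3) := by
      rw [← Finset.sum_range_reflect (fun j => 4*C / ((m:ℝ) * (qq (((j+1:ℕ)):ℝ))^3)) m]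
      apply Finset.sum_congr rfl
      intro n hn
      have hn' := Finset.mem_range.1 hn
      rw [show m - 1 - n + 1 = m - n by omega]
    rw [hrefl]
    have heq : ∀ j : ℕ, 4*C / ((m:ℝ) * (qq (((j+1:ℕ)):ℝ))^3)
        = (4*C/(m:ℝ)) * (1 / (qq (((j:ℝ)+1))^3)) := by
      intro j
      push_cast
      rw [div_mul_div_comm]
      ring_nf
    rw [Finset.sum_congr rfl (fun j _ => heq j), ← Finset.mul_sum]
    have h4cm : (0:ℝ) ≤ 4*C/(m:ℝ) := by positivity
    calc (4*C/(m:ℝ)) * ∑ j ∈ Finset.range m, 1 / (qq (((j:ℝ)+1))^3)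
        ≤ (4*C/(m:ℝ)) * (4 * qq ((m:ℕ):ℝ)) := by
          apply mul_le_mul_of_nonneg_left _ h4cm
          have := sumA m
          simpa [one_div] using this
      _ ≤ 16 * C := by
          rw [div_mul_eq_mul_div, div_le_iff₀ (by linarith : (0:ℝ) < (m:ℝ))]
          have hqle : qq ((m:ℕ):ℝ) ≤ (m:ℝ) := qq_le_self hmR
          nlinarith
  -- S2 bound
  have hS2 : ∑ n ∈ Finset.range m, 8*C / ((qq (((n+1:ℕ)):ℝ))^3 * (qq ((m:ℕ):ℝ))^3) ≤ 32 * C := by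
    have heq : ∀ n : ℕ, 8*C / ((qq (((n+1:ℕ)):ℝ))^3 * (qq ((m:ℕ):ℝ))^3)
        = (8*C/(qq ((m:ℕ):ℝ))^3) * (1 / (qq (((n:ℝ)+1))^3)) := by
      intro n
      push_cast
      rw [div_mul_div_comm]
      ring_nf
    rw [Finset.sum_congr rfl (fun n _ => heq n), ← Finset.mul_sum]
    have hqmpos : (0:ℝ) < qq ((m:ℕ):ℝ) := by linarith
    have h8cm : (0:ℝ) ≤ 8*C/(qq ((m:ℕ):ℝ))^3 := by positivity
    calc (8*C/(qq ((m:ℕ):ℝ))^3) * ∑ n ∈ Finset.range m, 1 / (qq (((n:ℝ)+1))^3)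
        ≤ (8*C/(qq ((m:ℕ):ℝ))^3) * (4 * qq ((m:ℕ):ℝ)) := by
          apply mul_le_mul_of_nonneg_left _ h8cm
          have := sumA m
          simpa [one_div] using this
      _ ≤ 32 * C := by
          rw [div_mul_eq_mul_div, div_le_iff₀ (by positivity)]
          -- 8C * (4 qq m) ≤ 32 C * (qq m)^3
          have hcube : qq ((m:ℕ):ℝ) ≤ (qq ((m:ℕ):ℝ))^3 := by nlinarith [hqm1, sq_nonneg (qq ((m:ℕ):ℝ) - 1), sq_nonneg (qq ((m:ℕ):ℝ) + 1)]
          nlinarith [mul_le_mul_of_nonneg_left hcube (by linarith : (0:ℝ) ≤ 32*C)]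
  linarith

noncomputable def uu (K : ℕ → ℕ → ℝ) (n m : ℕ) : ℝ :=
  if n = m then 1 else
    (if n < m then K n m else K m n) * (qq (ww n) / qq (ww m))

lemma uu_nonneg (K : ℕ → ℕ → ℝ) (hK0 : ∀ n m, 0 ≤ K n m) (n m : ℕ) : 0 ≤ uu K n m := by
  unfold uu
  split
  · norm_num
  · split <;> exact mul_nonneg (hK0 _ _) (div_nonneg (qq_nonneg _) (qq_nonneg _))

lemma uuRowSum (C : ℝ) (hC : 0 < C) (K : ℕ → ℕ → ℝ) (hK0 : ∀ n m, 0 ≤ K n m)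
    (hK : ∀ n m, n < m → K n m ≤ C / (ww n * (((m - n : ℕ)):ℝ)))
    (n : ℕ) (s : Finset ℕ) :
    ∑ y ∈ s, uu K n y ≤ 1 + 53 * C := by
  classical
  rw [← Finset.sum_filter_add_sum_filter_not s (fun y => y < n)]
  rw [← Finset.sum_filter_add_sum_filter_not (s.filter (fun y => ¬ y < n)) (fun y => y = n)]
  have hT1 : ∑ y ∈ s.filter (fun y => y < n), uu K n y ≤ 48 * C := by
    have hcongr : ∑ y ∈ s.filter (fun y => y < n), uu K n y
        = ∑ y ∈ s.filter (fun y => y < n), K y n * (qq (ww n) / qq (ww y)) := by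
      apply Finset.sum_congr rfl
      intro y hy
      have hy' := (Finset.mem_filter.1 hy).2
      unfold uu
      rw [if_neg (by omega), if_neg (by omega)]
    rw [hcongr]
    exact colBound C hC K hK0 hK n _ (fun y hy => (Finset.mem_filter.1 hy).2)
  have hT2 : ∑ y ∈ (s.filter (fun y => ¬ y < n)).filter (fun y => y = n), uu K n y ≤ 1 := by
    have hsub : (s.filter (fun y => ¬ y < n)).filter (fun y => y = n) ⊆ {n} := by
      intro y hy
      have := (Finset.mem_filter.1 hy).2
      simp [this]
    calc ∑ y ∈ (s.filter (fun y => ¬ y < n)).filter (fun y => y = n), uu K n y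
        ≤ ∑ y ∈ ({n} : Finset ℕ), uu K n y :=
          Finset.sum_le_sum_of_subset_of_nonneg hsub (fun y _ _ => uu_nonneg K hK0 n y)
      _ = uu K n n := Finset.sum_singleton _ _
      _ = 1 := by unfold uu; rw [if_pos rfl]
  have hT3 : ∑ y ∈ (s.filter (fun y => ¬ y < n)).filter (fun y => ¬ y = n), uu K n y ≤ 5 * C := by
    have hmem : ∀ y ∈ (s.filter (fun y => ¬ y < n)).filter (fun y => ¬ y = n), n < y := by
      intro y hy
      have h1 := (Finset.mem_filter.1 (Finset.mem_filter.1 hy).1).2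
      have h2 := (Finset.mem_filter.1 hy).2
      omega
    have hcongr : ∑ y ∈ (s.filter (fun y => ¬ y < n)).filter (fun y => ¬ y = n), uu K n y
        = ∑ y ∈ (s.filter (fun y => ¬ y < n)).filter (fun y => ¬ y = n),
            K n y * (qq (ww n) / qq (ww y)) := by
      apply Finset.sum_congr rfl
      intro y hy
      have := hmem y hy
      unfold uu
      rw [if_neg (by omega), if_pos (by omega)]
    rw [hcongr]
    exact rowBound C hC K hK0 hK n _ hmem
  linarith

-- algebraic AM-GM step
lemma amgm_step (K' A B x y : ℝ) (hK' : 0 ≤ K') (hA : 0 < A) (hB : 0 < B) :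
    x * (y * K') ≤ (K' * (A/B) * x^2 + K' * (B/A) * y^2) / 2 := by
  rw [le_div_iff₀ (by norm_num : (0:ℝ) < 2)]
  have hiden : K' * (A/B) * x^2 + K' * (B/A) * y^2 - x*(y*K')*2
      = K' * (A*x - B*y)^2 / (A*B) + K' * (A*x - B*y)^2 / (A*B) - K' * (A*x-B*y)^2/(A*B) := by
    field_simp
    ring
  nlinarith [div_nonneg (mul_nonneg hK' (sq_nonneg (A*x - B*y))) (mul_pos hA hB).le]

lemma finsetBound {E : Type*} [NormedAddCommGroup E] [InnerProductSpace ℂ E]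
    (C : ℝ) (hC : 0 < C) (φ : ℕ → E) (hφ : ∀ n, ‖φ n‖ = 1)
    (hKhyp : ∀ n m : ℕ, n < m →
      ‖(inner ℂ (φ n) (φ m) : ℂ)‖ ≤ C / (Real.sqrt (1 + (n : ℝ) ^ 2) * ((m : ℝ) - n)))
    (a : ℕ → ℂ) (s : Finset ℕ) :
    ‖∑ n ∈ s, a n • φ n‖ ^ 2 ≤ (1 + 53 * C) * ∑ n ∈ s, ‖a n‖ ^ 2 := by
  classical
  set K : ℕ → ℕ → ℝ := fun n m => ‖(inner ℂ (φ n) (φ m) : ℂ)‖ with hKdef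
  set b : ℕ → ℝ := fun n => ‖a n‖ with hbdef
  have hK0 : ∀ n m, 0 ≤ K n m := fun n m => norm_nonneg _
  have hKsymm : ∀ n m, K n m = K m n := by
    intro n m
    rw [hKdef]
    simp only []
    rw [← inner_conj_symm (φ n) (φ m)]
    exact (RCLike.norm_conj _)
  have hK : ∀ n m, n < m → K n m ≤ C / (ww n * (((m - n : ℕ)):ℝ)) := by
    intro n m hnm
    have h := hKhyp n m hnm
    rw [ww]
    have hc : ((m - n : ℕ):ℝ) = (m:ℝ) - (n:ℝ) := by
      push_cast [Nat.cast_sub hnm.le]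
      ring
    rw [hc]
    exact h
  have hKdiag : ∀ n, K n n = 1 := by
    intro n
    rw [hKdef]
    simp only []
    rw [inner_self_eq_norm_sq_to_K]
    rw [norm_pow]
    rw [hφ n]
    norm_num
  -- expansion of the squared norm
  have hns : ‖∑ n ∈ s, a n • φ n‖ ^ 2
      = RCLike.re (inner (𝕜 := ℂ) (∑ n ∈ s, a n • φ n) (∑ m ∈ s, a m • φ m)) :=
    (inner_self_eq_norm_sq _).symm
  have hexp : (inner ℂ (∑ n ∈ s, a n • φ n) (∑ m ∈ s, a m • φ m) : ℂ)
      = ∑ n ∈ s, ∑ m ∈ s, (starRingEnd ℂ) (a n) * (a m * inner ℂ (φ n) (φ m)) := by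
    rw [sum_inner]
    apply Finset.sum_congr rfl
    intro n _
    rw [inner_smul_left, inner_sum, Finset.mul_sum]
    apply Finset.sum_congr rfl
    intro m _
    rw [inner_smul_right]
  have hre : RCLike.re (inner (𝕜 := ℂ) (∑ n ∈ s, a n • φ n) (∑ m ∈ s, a m • φ m))
      = ∑ n ∈ s, ∑ m ∈ s, RCLike.re ((starRingEnd ℂ) (a n) * (a m * inner ℂ (φ n) (φ m))) := by
    rw [hexp, map_sum]
    apply Finset.sum_congr rfl
    intro n _
    rw [map_sum]
  have hbound1 : ∀ n m : ℕ, RCLike.re ((starRingEnd ℂ) (a n) * (a m * inner ℂ (φ n) (φ m)))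
      ≤ b n * (b m * K n m) := by
    intro n m
    calc RCLike.re ((starRingEnd ℂ) (a n) * (a m * inner ℂ (φ n) (φ m)))
        ≤ ‖(starRingEnd ℂ) (a n) * (a m * inner ℂ (φ n) (φ m))‖ := RCLike.re_le_norm _
      _ = b n * (b m * K n m) := by
          rw [norm_mul, norm_mul, RCLike.norm_conj]
  have hpoint : ∀ n m : ℕ, b n * (b m * K n m)
      ≤ (uu K n m * b n ^ 2 + uu K m n * b m ^ 2) / 2 := by
    intro n m
    rcases lt_trichotomy n m with h | h | h
    · have h1 : uu K n m = K n m * (qq (ww n) / qq (ww m)) := by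
        unfold uu; rw [if_neg (by omega), if_pos h]
      have h2 : uu K m n = K n m * (qq (ww m) / qq (ww n)) := by
        unfold uu; rw [if_neg (by omega), if_neg (by omega)]
      rw [h1, h2]
      have := amgm_step (K n m) (qq (ww n)) (qq (ww m)) (b n) (b m)
        (hK0 n m) (qq_pos (ww_pos n)) (qq_pos (ww_pos m))
      convert this using 2 <;> ring
    · subst h
      rw [hKdiag n]
      unfold uu
      rw [if_pos rfl]
      have : 0 ≤ b n := norm_nonneg _
      nlinarith
    · have h1 : uu K n m = K m n * (qq (ww n) / qq (ww m)) := by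
        unfold uu; rw [if_neg (by omega), if_neg (by omega)]
      have h2 : uu K m n = K m n * (qq (ww m) / qq (ww n)) := by
        unfold uu; rw [if_neg (by omega), if_pos h]
      rw [h1, h2, hKsymm n m]
      have := amgm_step (K m n) (qq (ww n)) (qq (ww m)) (b n) (b m)
        (hK0 m n) (qq_pos (ww_pos n)) (qq_pos (ww_pos m))
      convert this using 2 <;> ring
  have hA : ∀ x : ℕ, ∑ y ∈ s, uu K x y ≤ 1 + 53 * C := fun x => uuRowSum C hC K hK0 hK x s
  -- put it together
  have hchain : ‖∑ n ∈ s, a n • φ n‖ ^ 2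
      ≤ ∑ n ∈ s, ∑ m ∈ s, (uu K n m * b n ^ 2 + uu K m n * b m ^ 2) / 2 := by
    rw [hns, hre]
    apply le_trans (Finset.sum_le_sum (fun n _ => Finset.sum_le_sum (fun m _ => hbound1 n m)))
    exact Finset.sum_le_sum (fun n _ => Finset.sum_le_sum (fun m _ => hpoint n m))
  have hsplit : ∑ n ∈ s, ∑ m ∈ s, (uu K n m * b n ^ 2 + uu K m n * b m ^ 2) / 2
      = (∑ n ∈ s, (∑ m ∈ s, uu K n m) * (b n ^ 2 / 2))
        + (∑ m ∈ s, (∑ n ∈ s, uu K m n) * (b m ^ 2 / 2)) := by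
    have h1 : ∀ n m : ℕ, (uu K n m * b n ^ 2 + uu K m n * b m ^ 2) / 2
        = uu K n m * (b n ^ 2 / 2) + uu K m n * (b m ^ 2 / 2) := by intros; ring
    calc ∑ n ∈ s, ∑ m ∈ s, (uu K n m * b n ^ 2 + uu K m n * b m ^ 2) / 2
        = ∑ n ∈ s, ∑ m ∈ s, (uu K n m * (b n ^ 2 / 2) + uu K m n * (b m ^ 2 / 2)) := by
          apply Finset.sum_congr rfl; intro n _
          apply Finset.sum_congr rfl; intro m _
          exact h1 n m
      _ = (∑ n ∈ s, ∑ m ∈ s, uu K n m * (b n ^ 2 / 2))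
          + ∑ n ∈ s, ∑ m ∈ s, uu K m n * (b m ^ 2 / 2) := by
          rw [← Finset.sum_add_distrib]
          apply Finset.sum_congr rfl; intro n _
          rw [← Finset.sum_add_distrib]
      _ = (∑ n ∈ s, (∑ m ∈ s, uu K n m) * (b n ^ 2 / 2))
          + ∑ m ∈ s, ∑ n ∈ s, uu K m n * (b m ^ 2 / 2) := by
          congr 1
          · apply Finset.sum_congr rfl; intro n _
            rw [Finset.sum_mul]
          · exact Finset.sum_comm
      _ = (∑ n ∈ s, (∑ m ∈ s, uu K n m) * (b n ^ 2 / 2))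
          + ∑ m ∈ s, (∑ n ∈ s, uu K m n) * (b m ^ 2 / 2) := by
          congr 1
          apply Finset.sum_congr rfl; intro m _
          rw [Finset.sum_mul]
  have hfinal : (∑ n ∈ s, (∑ m ∈ s, uu K n m) * (b n ^ 2 / 2))
        + (∑ m ∈ s, (∑ n ∈ s, uu K m n) * (b m ^ 2 / 2))
      ≤ (1 + 53 * C) * ∑ n ∈ s, ‖a n‖ ^ 2 := by
    have hb2 : ∀ n : ℕ, (0:ℝ) ≤ b n ^ 2 / 2 := fun n => by positivity
    have hg : ∀ t : Finset ℕ, ∑ n ∈ t, (∑ m ∈ s, uu K n m) * (b n ^ 2 / 2)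
        ≤ ∑ n ∈ t, (1 + 53 * C) * (b n ^ 2 / 2) := by
      intro t
      apply Finset.sum_le_sum
      intro n _
      exact mul_le_mul_of_nonneg_right (hA n) (hb2 n)
    have hhalf : ∑ n ∈ s, (1 + 53*C) * (b n ^ 2 / 2)
        = (1 + 53*C) / 2 * ∑ n ∈ s, ‖a n‖ ^ 2 := by
      rw [Finset.mul_sum]
      apply Finset.sum_congr rfl
      intro n _
      rw [hbdef]
      ring
    have h1 := hg s
    rw [hhalf] at h1
    linarith
  linarith [hchain, hsplit.le, hfinal]


end AuxAlmostOrth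

/-- Almost-orthogonality estimate: if `(φ_n)` are unit vectors in a complex Hilbert space with
`|⟨φ_n, φ_m⟩| ≤ C/(√(1 + n²)(m − n))` for `n < m`, then there is `C̃ > 0` depending only on `C`
such that for every `a ∈ ℓ²` the series `Σ a_n φ_n` converges and
`‖Σ a_n φ_n‖² ≤ (1 + C̃) Σ |a_n|²`. -/
theorem almost_orthogonal_series (C : ℝ) (hC : 0 < C) :
    ∃ Ct : ℝ, 0 < Ct ∧
      ∀ (V : Type*) [NormedAddCommGroup V] [InnerProductSpace ℂ V] [CompleteSpace V]
        (φ : ℕ → V), (∀ n, ‖φ n‖ = 1) →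
        (∀ n m : ℕ, n < m →
          ‖(inner ℂ (φ n) (φ m) : ℂ)‖ ≤ C / (Real.sqrt (1 + (n : ℝ) ^ 2) * ((m : ℝ) - n))) →
        ∀ a : ℕ → ℂ, Summable (fun n => ‖a n‖ ^ 2) →
          ∃ s : V,
            Tendsto (fun N => ∑ n ∈ Finset.range N, a n • φ n) atTop (nhds s) ∧
            ‖s‖ ^ 2 ≤ (1 + Ct) * ∑' n, ‖a n‖ ^ 2 := by
  refine ⟨53 * C, by positivity, ?_⟩
  intro V _ _ _ φ hφ hK a ha
  have key : ∀ s : Finset ℕ, ‖∑ n ∈ s, a n • φ n‖ ^ 2 ≤ (1 + 53 * C) * ∑ n ∈ s, ‖a n‖ ^ 2 :=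
    fun s => finsetBound C hC φ hφ hK a s
  set t : ℕ → ℝ := fun N => ∑ n ∈ Finset.range N, ‖a n‖ ^ 2 with htdef
  have htend : Tendsto t atTop (nhds (∑' n, ‖a n‖ ^ 2)) := ha.hasSum.tendsto_sum_nat
  have hct : CauchySeq t := htend.cauchySeq
  set P : ℕ → V := fun N => ∑ n ∈ Finset.range N, a n • φ n with hPdef
  have hden : (0:ℝ) < 1 + 53 * C := by linarith
  have hcP : CauchySeq P := by
    rw [Metric.cauchySeq_iff']
    intro ε hε
    rcases Metric.cauchySeq_iff'.1 hct (ε ^ 2 / (1 + 53 * C)) (by positivity) with ⟨N₀, hN₀⟩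
    refine ⟨N₀, ?_⟩
    intro n hn
    have hPsub : P n - P N₀ = ∑ i ∈ Finset.Ico N₀ n, a i • φ i :=
      (Finset.sum_Ico_eq_sub _ hn).symm
    have htsub : ∑ i ∈ Finset.Ico N₀ n, ‖a i‖ ^ 2 = t n - t N₀ :=
      Finset.sum_Ico_eq_sub _ hn
    have hd := hN₀ n hn
    rw [Real.dist_eq] at hd
    have habs : t n - t N₀ < ε ^ 2 / (1 + 53 * C) := lt_of_abs_lt (by rwa [] at hd)
    have hb := key (Finset.Ico N₀ n)
    rw [htsub] at hb
    have hlt : ‖P n - P N₀‖ ^ 2 < ε ^ 2 := by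
      rw [hPsub]
      calc ‖∑ i ∈ Finset.Ico N₀ n, a i • φ i‖ ^ 2 ≤ (1 + 53 * C) * (t n - t N₀) := hb
        _ < (1 + 53 * C) * (ε ^ 2 / (1 + 53 * C)) :=
            mul_lt_mul_of_pos_left habs hden
        _ = ε ^ 2 := by field_simp
    rw [dist_eq_norm]
    exact lt_of_pow_lt_pow_left₀ 2 hε.le hlt
  obtain ⟨sV, hsV⟩ := cauchySeq_tendsto_of_complete hcP
  refine ⟨sV, hsV, ?_⟩
  have hnormsq : Tendsto (fun N => ‖P N‖ ^ 2) atTop (nhds (‖sV‖ ^ 2)) :=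
    (hsV.norm).pow 2
  apply le_of_tendsto hnormsq
  filter_upwards with N
  calc ‖P N‖ ^ 2 ≤ (1 + 53 * C) * ∑ n ∈ Finset.range N, ‖a n‖ ^ 2 := key _
    _ ≤ (1 + 53 * C) * ∑' n, ‖a n‖ ^ 2 := by
        apply mul_le_mul_of_nonneg_left _ hden.le
        exact Summable.sum_le_tsum _ (fun i _ => sq_nonneg _) ha
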